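/- For a fixed real number k > 0 and coprime positive integers m, n, we have π_k(x; m, n) − π(x^{k+1}; m, n) = O(x^{k+1} exp(−(α/2)√(log x))) as x → ∞, where α is the positive constant from the prime number theorem for arithmetic progressions. -/

import Mathlib

open Real Filter Finset MeasureTheory intervalIntegral

/-- The finset of primes `p ≤ x` with `p ≡ n (mod m)`. -/
noncomputable def primesTo (x : ℝ) (m n : ℕ) : Finset ℕ :=
  (Finset.range (⌊x⌋₊ + 1)).filter fun p => p.Prime ∧ p % m = n % m

/-- `π(x; m, n)`, the number of primes `p ≤ x` with `p ≡ n (mod m)`. -/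
noncomputable def piCount (x : ℝ) (m n : ℕ) : ℝ := (primesTo x m n).card

/-- `π_k(x; m, n) = Σ_{p ≤ x, p ≡ n (mod m)} p^k`. -/
noncomputable def piPow (k x : ℝ) (m n : ℕ) : ℝ :=
  ∑ p ∈ primesTo x m n, (p : ℝ) ^ k

noncomputable def ind (m n p : ℕ) : ℝ := if p.Prime ∧ p % m = n % m then 1 else 0

lemma range_succ_eq_Icc (N : ℕ) : Finset.range (N + 1) = Finset.Icc 0 N := by
  ext p; simp [Nat.lt_succ_iff]

lemma piCount_eq_sum (x : ℝ) (m n : ℕ) :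
    piCount x m n = ∑ p ∈ Finset.Icc 0 ⌊x⌋₊, ind m n p := by
  rw [piCount, primesTo, Finset.card_filter, range_succ_eq_Icc]
  push_cast
  simp [ind, apply_ite ((↑·) : ℕ → ℝ)]

lemma piPow_eq_sum (k x : ℝ) (m n : ℕ) :
    piPow k x m n = ∑ p ∈ Finset.Icc 0 ⌊x⌋₊, (p : ℝ) ^ k * ind m n p := by
  rw [piPow, primesTo, range_succ_eq_Icc]
  rw [Finset.sum_filter]
  refine Finset.sum_congr rfl fun p _ => ?_
  simp [ind, mul_comm]

lemma piCount_measurable (m n : ℕ) : Measurable fun t : ℝ => piCount t m n := by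
  have : (fun t : ℝ => piCount t m n)
      = (fun N : ℕ => (((Finset.range (N + 1)).filter
          fun p => p.Prime ∧ p % m = n % m).card : ℝ)) ∘ Nat.floor := rfl
  rw [this]
  exact measurable_from_nat.comp Nat.measurable_floor

lemma piCount_nonneg (x : ℝ) (m n : ℕ) : 0 ≤ piCount x m n := by
  unfold piCount; positivity

lemma piCount_le (x : ℝ) (m n : ℕ) : piCount x m n ≤ ⌊x⌋₊ + 1 := by
  have := Finset.card_filter_le (Finset.range (⌊x⌋₊ + 1))
    (fun p => p.Prime ∧ p % m = n % m)
  unfold piCount primesTo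
  exact_mod_cast le_trans (Nat.cast_le.mpr this) (by simp)

lemma ind_zero (m n : ℕ) : ind m n 0 = 0 := by simp [ind, Nat.not_prime_zero]
lemma ind_one (m n : ℕ) : ind m n 1 = 0 := by simp [ind, Nat.not_prime_one]

lemma sum_Icc_eq (f : ℕ → ℝ) (m n : ℕ) {N : ℕ} (hN : 2 ≤ N) :
    ∑ p ∈ Finset.Icc 0 N, f p * ind m n p
      = f 2 * ind m n 2 + ∑ p ∈ Finset.Ioc 2 N, f p * ind m n p := by
  have hsplit : Finset.Icc 0 N = Finset.Icc 0 2 ∪ Finset.Ioc 2 N := by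
    ext p; simp only [Finset.mem_Icc, Finset.mem_union, Finset.mem_Ioc]; omega
  rw [hsplit, Finset.sum_union]
  · congr 1
    have : Finset.Icc 0 2 = {0, 1, 2} := by decide
    rw [this]
    simp [ind_zero, ind_one]
  · simp only [Finset.disjoint_left, Finset.mem_Icc, Finset.mem_Ioc]
    omega

lemma abel_identity (k x : ℝ) (hk : 0 < k) (hx : 2 ≤ x) (m n : ℕ) :
    piPow k x m n = x ^ k * piCount x m n
      - ∫ t in (2:ℝ)..x, (k * t ^ (k - 1)) * piCount t m n := by
  have hne : ∀ t : ℝ, t ∈ Set.Icc (2:ℝ) x → t ≠ 0 := fun t ht => by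
    have := ht.1; positivity
  have hderiv : Set.EqOn (deriv fun t : ℝ => t ^ k) (fun t => k * t ^ (k - 1))
      (Set.Icc 2 x) := fun t ht => Real.deriv_rpow_const t k
  have hf_diff : ∀ t ∈ Set.Icc (2:ℝ) x, DifferentiableAt ℝ (fun t : ℝ => t ^ k) t :=
    fun t ht => (Real.hasDerivAt_rpow_const (p := k) (Or.inl (hne t ht))).differentiableAt
  have hcont : ContinuousOn (fun t : ℝ => k * t ^ (k - 1)) (Set.Icc 2 x) := by
    refine ContinuousOn.mul continuousOn_const ?_
    exact fun t ht => (Real.continuousAt_rpow_const t (k-1) (Or.inl (hne t ht))).continuousWithinAt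
  have hf_int : IntegrableOn (deriv fun t : ℝ => t ^ k) (Set.Icc 2 x) :=
    (hcont.integrableOn_Icc).congr_fun hderiv.symm measurableSet_Icc
  have h := sum_mul_eq_sub_sub_integral_mul (ind m n) (f := fun t : ℝ => t ^ k)
    (by norm_num : (0:ℝ) ≤ 2) hx hf_diff hf_int
  have hfl2 : ⌊(2:ℝ)⌋₊ = 2 := by norm_num
  have hflx : 2 ≤ ⌊x⌋₊ := Nat.le_floor (by exact_mod_cast hx)
  rw [hfl2] at h
  have e1 : piPow k x m n = ((2:ℝ)) ^ k * ind m n 2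
      + ∑ p ∈ Finset.Ioc 2 ⌊x⌋₊, (p : ℝ) ^ k * ind m n p := by
    rw [piPow_eq_sum]; exact_mod_cast sum_Icc_eq (fun p : ℕ => (p:ℝ) ^ k) m n hflx
  have e2 : ∑ p ∈ Finset.Icc 0 2, ind m n p = ind m n 2 := by
    have : Finset.Icc 0 2 = {0, 1, 2} := by decide
    rw [this]; simp [ind_zero, ind_one]
  have e3 : ∫ t in Set.Ioc (2:ℝ) x, deriv (fun t : ℝ => t ^ k) t * ∑ p ∈ Finset.Icc 0 ⌊t⌋₊, ind m n p
      = ∫ t in (2:ℝ)..x, (k * t ^ (k - 1)) * piCount t m n := by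
    rw [intervalIntegral.integral_of_le hx]
    refine MeasureTheory.setIntegral_congr_fun measurableSet_Ioc fun t ht => ?_
    rw [hderiv (Set.Ioc_subset_Icc_self ht), piCount_eq_sum]
  rw [e3] at h
  rw [e1, h, e2, ← piCount_eq_sum]
  push_cast
  ring

noncomputable def Li (x : ℝ) : ℝ := ∫ t in (2:ℝ)..x, 1 / Real.log t

lemma contOn_invlog : ContinuousOn (fun u : ℝ => 1 / Real.log u) (Set.Ioi 1) := by
  refine ContinuousOn.div continuousOn_const
    (Real.continuousOn_log.mono fun u hu => ?_) fun u hu => ?_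
  · simp only [Set.mem_compl_iff, Set.mem_singleton_iff]
    intro h; rw [h] at hu; exact absurd hu (by simp)
  · exact ne_of_gt (Real.log_pos hu)

lemma Li_hasDerivAt {t : ℝ} (ht : 1 < t) : HasDerivAt Li (1 / Real.log t) t := by
  refine intervalIntegral.integral_hasDerivAt_right ?_ ?_ ?_
  · refine (contOn_invlog.mono ?_).intervalIntegrable
    rcases le_total 2 t with h | h
    · rw [Set.uIcc_of_le h]; exact fun u hu => lt_of_lt_of_le one_lt_two hu.1
    · rw [Set.uIcc_of_ge h]; exact fun u hu => lt_of_lt_of_le ht hu.1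
  · exact contOn_invlog.stronglyMeasurableAtFilter isOpen_Ioi t ht
  · exact contOn_invlog.continuousAt (isOpen_Ioi.mem_nhds ht)

lemma Li_continuousAt {t : ℝ} (ht : 1 < t) : ContinuousAt Li t :=
  (Li_hasDerivAt ht).continuousAt

lemma ibp_Li {k x : ℝ} (hk : 0 < k) (hx : 2 ≤ x) :
    ∫ t in (2:ℝ)..x, (k * t ^ (k - 1)) * Li t
      = x ^ k * Li x - ∫ t in (2:ℝ)..x, t ^ k / Real.log t := by
  have hmem : ∀ t ∈ Set.uIcc (2:ℝ) x, 2 ≤ t := by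
    rw [Set.uIcc_of_le hx]; exact fun t ht => ht.1
  have hG : ∀ t ∈ Set.uIcc (2:ℝ) x, HasDerivAt (fun t : ℝ => t ^ k * Li t)
      ((k * t ^ (k - 1)) * Li t + t ^ k / Real.log t) t := by
    intro t ht
    have h2t := hmem t ht
    have h1 : HasDerivAt (fun t : ℝ => t ^ k) (k * t ^ (k - 1)) t :=
      Real.hasDerivAt_rpow_const (Or.inl (by linarith))
    have h2 : HasDerivAt Li (1 / Real.log t) t := Li_hasDerivAt (by linarith)
    have : HasDerivAt (fun t : ℝ => t ^ k * Li t) (k * t ^ (k - 1) * Li t + t ^ k * (1 / Real.log t)) t := h1.mul h2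
    convert this using 1
    have : t ^ k * (1 / Real.log t) = t ^ k / Real.log t := by ring
    linarith [this]
  have hcontLi : ContinuousOn Li (Set.uIcc (2:ℝ) x) := fun t ht =>
    (Li_continuousAt (by linarith [hmem t ht])).continuousWithinAt
  have hrpow : ∀ p : ℝ, ContinuousOn (fun t : ℝ => t ^ p) (Set.uIcc (2:ℝ) x) := fun p t ht =>
    (Real.continuousAt_rpow_const t p (Or.inl (by linarith [hmem t ht]))).continuousWithinAt
  have hcont1 : ContinuousOn (fun t : ℝ => (k * t ^ (k - 1)) * Li t) (Set.uIcc (2:ℝ) x) :=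
    (continuousOn_const.mul (hrpow (k-1))).mul hcontLi
  have hcont2 : ContinuousOn (fun t : ℝ => t ^ k / Real.log t) (Set.uIcc (2:ℝ) x) := by
    refine (hrpow k).mul (contOn_invlog.mono fun t ht => ?_) |>.congr fun t ht => ?_
    · exact lt_of_lt_of_le one_lt_two (hmem t ht)
    · simp [div_eq_mul_inv]
  have hFTC := intervalIntegral.integral_eq_sub_of_hasDerivAt hG
    ((hcont1.add hcont2).intervalIntegrable)
  rw [intervalIntegral.integral_add hcont1.intervalIntegrable hcont2.intervalIntegrable] at hFTC
  have hLi2 : Li 2 = 0 := intervalIntegral.integral_same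
  rw [hLi2] at hFTC
  have : x ^ k * Li x - (2:ℝ) ^ k * 0 = x ^ k * Li x := by ring
  rw [this] at hFTC
  linarith [hFTC]

lemma a0_lt {k : ℝ} (hk : 0 < k) : 1 < (2:ℝ) ^ (1/(k+1)) ∧ (2:ℝ) ^ (1/(k+1)) ≤ 2 := by
  constructor
  · rw [Real.one_lt_rpow_iff_of_pos (by norm_num)]
    left; constructor <;> [norm_num; positivity]
  · calc (2:ℝ) ^ (1/(k+1)) ≤ 2 ^ (1:ℝ) :=
        Real.rpow_le_rpow_of_exponent_le (by norm_num)
          (by rw [div_le_one (by linarith)]; linarith)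
    _ = 2 := Real.rpow_one 2

lemma Li_rpow {k x : ℝ} (hk : 0 < k) (hx : 2 ≤ x) :
    Li (x ^ (k + 1)) = ∫ t in ((2:ℝ) ^ (1/(k+1)))..x, t ^ k / Real.log t := by
  set a₀ : ℝ := (2:ℝ) ^ (1/(k+1)) with ha₀
  obtain ⟨ha1, ha2⟩ := a0_lt hk
  have hmem : ∀ t ∈ Set.uIcc a₀ x, 1 < t := by
    rw [Set.uIcc_of_le (le_trans ha2 hx)]; exact fun t ht => lt_of_lt_of_le ha1 ht.1
  have h : ∀ t ∈ Set.uIcc a₀ x, HasDerivAt (fun t : ℝ => t ^ (k+1)) ((k+1) * t ^ k) t := by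
    intro t ht
    have := Real.hasDerivAt_rpow_const (p := k+1) (Or.inl (by linarith [hmem t ht] : t ≠ 0))
    simpa [add_sub_cancel_right] using this
  have h' : ContinuousOn (fun t : ℝ => (k+1) * t ^ k) (Set.uIcc a₀ x) :=
    continuousOn_const.mul fun t ht =>
      (Real.continuousAt_rpow_const t k (Or.inl (by linarith [hmem t ht]))).continuousWithinAt
  have hg : ContinuousOn (fun u : ℝ => 1 / Real.log u) ((fun t : ℝ => t ^ (k+1)) '' Set.uIcc a₀ x) := by
    refine contOn_invlog.mono ?_
    rintro u ⟨t, ht, rfl⟩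
    exact (Real.one_lt_rpow_iff_of_pos (by linarith [hmem t ht])).mpr
      (Or.inl ⟨hmem t ht, by linarith⟩)
  have hsub := intervalIntegral.integral_comp_smul_deriv' h h' hg
  have ha₀pow : a₀ ^ (k+1) = 2 := by
    rw [ha₀, one_div, Real.rpow_inv_rpow (by norm_num) (by positivity)]
  rw [ha₀pow] at hsub
  rw [Li, ← hsub]
  refine intervalIntegral.integral_congr fun t ht => ?_
  have h1t := hmem t ht
  have hlog : Real.log (t ^ (k+1)) = (k+1) * Real.log t := Real.log_rpow (by linarith) _
  simp only [smul_eq_mul, Function.comp_apply, hlog]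
  have hlt : Real.log t ≠ 0 := ne_of_gt (Real.log_pos h1t)
  field_simp

lemma integrableOn_mul_piCount {g : ℝ → ℝ} {a b : ℝ} (m n : ℕ)
    (hg : ContinuousOn g (Set.Icc a b)) :
    IntegrableOn (fun t => g t * piCount t m n) (Set.Icc a b) := by
  rcases le_total a b with hab | hab
  · obtain ⟨C, hC⟩ := (isCompact_Icc (a := a) (b := b)).exists_bound_of_continuousOn hg
    refine ⟨(hg.aestronglyMeasurable measurableSet_Icc).mul
        ((piCount_measurable m n).aestronglyMeasurable.restrict),
      HasFiniteIntegral.restrict_of_bounded (C := |C| * (max b 0 + 1))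
        measure_Icc_lt_top ?_⟩
    · rw [ae_restrict_iff' measurableSet_Icc]
      refine Filter.Eventually.of_forall fun t ht => ?_
      have h1 : ‖g t‖ ≤ |C| := le_trans (hC t ht) (le_abs_self C)
      have h2 : piCount t m n ≤ max b 0 + 1 := by
        refine le_trans (piCount_le t m n) ?_
        have : (⌊t⌋₊ : ℝ) ≤ max b 0 := by
          rcases le_total t 0 with h | h
          · simp [Nat.floor_eq_zero.mpr (lt_of_le_of_lt h one_pos)]
          · exact le_trans (Nat.floor_le h) (le_trans ht.2 (le_max_left _ _))
        linarith
      have h3 : ‖piCount t m n‖ ≤ max b 0 + 1 := by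
        rw [Real.norm_eq_abs, abs_of_nonneg (piCount_nonneg t m n)]; exact h2
      calc ‖g t * piCount t m n‖ = ‖g t‖ * ‖piCount t m n‖ := norm_mul _ _
        _ ≤ |C| * (max b 0 + 1) := by
            refine mul_le_mul h1 h3 (norm_nonneg _) (abs_nonneg _)
  · rcases eq_or_lt_of_le hab with h | h
    · have : Set.Icc a b = {b} := by rw [← h, Set.Icc_self]
      rw [IntegrableOn, this]
      have hz : (volume : Measure ℝ).restrict {b} = 0 := by
        simp [Measure.restrict_singleton]
      rw [hz]
      exact integrable_zero_measure
    · rw [Set.Icc_eq_empty_of_lt h]; exact integrableOn_empty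

lemma contOn_rpow_Ioi (p : ℝ) : ContinuousOn (fun t : ℝ => t ^ p) (Set.Ioi (0:ℝ)) :=
  fun t ht => (Real.continuousAt_rpow_const t p (Or.inl (ne_of_gt ht))).continuousWithinAt

lemma contOn_log_Ioi : ContinuousOn Real.log (Set.Ioi (1:ℝ)) :=
  Real.continuousOn_log.mono fun t ht => by
    simp only [Set.mem_compl_iff, Set.mem_singleton_iff]
    intro h; rw [h] at ht; exact absurd ht (by simp)

lemma contOn_div_log (p : ℝ) : ContinuousOn (fun t : ℝ => t ^ p / Real.log t) (Set.Ioi (1:ℝ)) :=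
  ContinuousOn.div ((contOn_rpow_Ioi p).mono fun t (ht : t ∈ Set.Ioi (1:ℝ)) => Set.mem_Ioi.mpr (lt_trans one_pos (Set.mem_Ioi.mp ht)))
    contOn_log_Ioi fun t ht => ne_of_gt (Real.log_pos ht)

lemma contOn_mul_Li (p c : ℝ) :
    ContinuousOn (fun t : ℝ => (c * t ^ p) * Li t) (Set.Ioi (1:ℝ)) :=
  (continuousOn_const.mul ((contOn_rpow_Ioi p).mono fun t (ht : t ∈ Set.Ioi (1:ℝ)) => Set.mem_Ioi.mpr (lt_trans one_pos (Set.mem_Ioi.mp ht)))).mul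
    fun t ht => (Li_continuousAt ht).continuousWithinAt

lemma uIcc_subset_Ioi_one {a b : ℝ} (ha : 1 < a) (hb : 1 < b) :
    Set.uIcc a b ⊆ Set.Ioi (1:ℝ) := fun t ht => by
  rcases le_total a b with h | h
  · rw [Set.uIcc_of_le h] at ht; exact lt_of_lt_of_le ha ht.1
  · rw [Set.uIcc_of_ge h] at ht; exact lt_of_lt_of_le hb ht.1

lemma decomposition (k : ℝ) (hk : 0 < k) (m n : ℕ) {x : ℝ} (hx : 2 ≤ x) :
    piPow k x m n - piCount (x ^ (k + 1)) m n
      = x ^ k * (piCount x m n - (1 / (Nat.totient m : ℝ)) * Li x)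
        - (piCount (x ^ (k + 1)) m n - (1 / (Nat.totient m : ℝ)) * Li (x ^ (k + 1)))
        - (∫ t in (2:ℝ)..x, (k * t ^ (k - 1)) * (piCount t m n - (1 / (Nat.totient m : ℝ)) * Li t))
        - (1 / (Nat.totient m : ℝ)) * ∫ t in ((2:ℝ) ^ (1/(k+1)))..2, t ^ k / Real.log t := by
  set c : ℝ := 1 / (Nat.totient m : ℝ) with hc
  obtain ⟨ha1, ha2⟩ := a0_lt hk
  have hx1 : (1:ℝ) < x := lt_of_lt_of_le one_lt_two hx
  have habel := abel_identity k x hk hx m n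
  have hsub2x : Set.uIcc (2:ℝ) x ⊆ Set.Ioi (1:ℝ) := uIcc_subset_Ioi_one one_lt_two hx1
  have hI_Li : IntervalIntegrable (fun t => (k * t ^ (k - 1)) * Li t) volume 2 x :=
    ((contOn_mul_Li (k-1) k).mono hsub2x).intervalIntegrable
  have hI_pi : IntervalIntegrable (fun t => (k * t ^ (k - 1)) * piCount t m n) volume 2 x := by
    rw [intervalIntegrable_iff_integrableOn_Icc_of_le hx]
    refine integrableOn_mul_piCount m n ?_
    refine (continuousOn_const.mul ((contOn_rpow_Ioi (k-1)).mono ?_))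
    exact fun t ht => lt_of_lt_of_le two_pos ht.1
  have hI_E : IntervalIntegrable
      (fun t => (k * t ^ (k - 1)) * (piCount t m n - c * Li t)) volume 2 x := by
    have heq : (fun t => (k * t ^ (k - 1)) * (piCount t m n - c * Li t))
        = fun t => (k * t ^ (k - 1)) * piCount t m n - c * ((k * t ^ (k - 1)) * Li t) := by
      funext t; ring
    rw [heq]
    exact hI_pi.sub (hI_Li.const_mul c)
  have hsplit : ∫ t in (2:ℝ)..x, (k * t ^ (k - 1)) * piCount t m n
      = (∫ t in (2:ℝ)..x, (k * t ^ (k - 1)) * (piCount t m n - c * Li t))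
        + c * ∫ t in (2:ℝ)..x, (k * t ^ (k - 1)) * Li t := by
    rw [← intervalIntegral.integral_const_mul,
      ← intervalIntegral.integral_add hI_E ((hI_Li.const_mul c))]
    exact intervalIntegral.integral_congr fun t ht => by ring
  have hibp := ibp_Li hk hx
  have hLirpow := Li_rpow hk hx
  have hadj : (∫ t in ((2:ℝ) ^ (1/(k+1)))..2, t ^ k / Real.log t)
      + (∫ t in (2:ℝ)..x, t ^ k / Real.log t)
      = ∫ t in ((2:ℝ) ^ (1/(k+1)))..x, t ^ k / Real.log t := by
    refine intervalIntegral.integral_add_adjacent_intervals ?_ ?_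
    · exact ((contOn_div_log k).mono (uIcc_subset_Ioi_one ha1 one_lt_two)).intervalIntegrable
    · exact ((contOn_div_log k).mono hsub2x).intervalIntegrable
  rw [habel, hsplit, hibp, hLirpow, ← hadj]
  ring

lemma exp_sqrt_log_hasDerivAt {c₀ t : ℝ} (ht : 1 < t) :
    HasDerivAt (fun t : ℝ => Real.exp (-c₀ * Real.sqrt (Real.log t)))
      (Real.exp (-c₀ * Real.sqrt (Real.log t)) * (-c₀ * (1 / (2 * Real.sqrt (Real.log t)) * t⁻¹))) t := by
  have hlogpos : 0 < Real.log t := Real.log_pos ht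
  have h1 : HasDerivAt Real.log t⁻¹ t := Real.hasDerivAt_log (by linarith)
  have h2 : HasDerivAt Real.sqrt (1 / (2 * Real.sqrt (Real.log t))) (Real.log t) :=
    Real.hasDerivAt_sqrt (ne_of_gt hlogpos)
  have h3 : HasDerivAt (fun t : ℝ => Real.sqrt (Real.log t))
      (1 / (2 * Real.sqrt (Real.log t)) * t⁻¹) t := h2.comp t h1
  have h4 : HasDerivAt (fun t : ℝ => -c₀ * Real.sqrt (Real.log t))
      (-c₀ * (1 / (2 * Real.sqrt (Real.log t)) * t⁻¹)) t := h3.const_mul (-c₀)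
  exact (Real.hasDerivAt_exp _).comp t h4

lemma contOn_expsl (c₀ : ℝ) :
    ContinuousOn (fun t : ℝ => Real.exp (-c₀ * Real.sqrt (Real.log t))) (Set.Ioi (1:ℝ)) :=
  Real.continuous_exp.comp_continuousOn
    ((continuousOn_const.mul (Real.continuous_sqrt.comp_continuousOn contOn_log_Ioi)))

lemma key_integral_bound {k c₀ : ℝ} (hk : 0 < k) (hc₀ : 0 < c₀) {T x : ℝ} (hT : 2 ≤ T)
    (hlogT : c₀ / (k + 1) ≤ Real.sqrt (Real.log T)) (hx : T ≤ x) :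
    ∫ t in T..x, t ^ k * Real.exp (-c₀ * Real.sqrt (Real.log t))
      ≤ (2 / (k + 1)) * (x ^ (k + 1) * Real.exp (-c₀ * Real.sqrt (Real.log x))) := by
  set G : ℝ → ℝ := fun t => (k + 1) * t ^ k * Real.exp (-c₀ * Real.sqrt (Real.log t))
    + t ^ (k + 1) * (Real.exp (-c₀ * Real.sqrt (Real.log t))
        * (-c₀ * (1 / (2 * Real.sqrt (Real.log t)) * t⁻¹))) with hG
  have hmem : ∀ t ∈ Set.uIcc T x, 2 ≤ t := by
    rw [Set.uIcc_of_le hx]; exact fun t ht => le_trans hT ht.1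
  have hF : ∀ t ∈ Set.uIcc T x,
      HasDerivAt (fun t : ℝ => t ^ (k + 1) * Real.exp (-c₀ * Real.sqrt (Real.log t))) (G t) t := by
    intro t ht
    have h2t := hmem t ht
    have h1 : HasDerivAt (fun t : ℝ => t ^ (k + 1)) ((k + 1) * t ^ k) t := by
      have := Real.hasDerivAt_rpow_const (x := t) (p := k + 1) (Or.inl (by linarith))
      simpa [add_sub_cancel_right] using this
    exact h1.mul (exp_sqrt_log_hasDerivAt (by linarith))
  have hcontG : ContinuousOn G (Set.uIcc T x) := by
    have hsub : Set.uIcc T x ⊆ Set.Ioi (1:ℝ) := fun t ht => lt_of_lt_of_le one_lt_two (hmem t ht)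
    have c1 : ContinuousOn (fun t : ℝ => Real.sqrt (Real.log t)) (Set.Ioi (1:ℝ)) :=
      Real.continuous_sqrt.comp_continuousOn contOn_log_Ioi
    have c2 : ContinuousOn (fun t : ℝ => 1 / (2 * Real.sqrt (Real.log t)) * t⁻¹) (Set.Ioi (1:ℝ)) := by
      refine ContinuousOn.mul (ContinuousOn.div continuousOn_const
        (continuousOn_const.mul c1) fun t ht => ?_) ?_
      · have : 0 < Real.sqrt (Real.log t) := Real.sqrt_pos.mpr (Real.log_pos ht)
        positivity
      · exact ContinuousOn.inv₀ continuousOn_id fun t ht => by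
          have : (1:ℝ) < t := ht; exact ne_of_gt (by linarith)
    refine ContinuousOn.mono ?_ hsub
    exact ((continuousOn_const.mul (contOn_rpow_Ioi k |>.mono fun t (ht : t ∈ Set.Ioi (1:ℝ)) => Set.mem_Ioi.mpr (lt_trans one_pos (Set.mem_Ioi.mp ht)))).mul
      (contOn_expsl c₀)).add
      (((contOn_rpow_Ioi (k+1)).mono fun t (ht : t ∈ Set.Ioi (1:ℝ)) => Set.mem_Ioi.mpr (lt_trans one_pos (Set.mem_Ioi.mp ht))).mul
        ((contOn_expsl c₀).mul (continuousOn_const.mul c2)))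
  have hptwise : ∀ t ∈ Set.Icc T x,
      t ^ k * Real.exp (-c₀ * Real.sqrt (Real.log t)) ≤ (2 / (k + 1)) * G t := by
    intro t ht
    have h2t : 2 ≤ t := le_trans hT ht.1
    have htpos : (0:ℝ) < t := by linarith
    have hlogpos : 0 < Real.log t := Real.log_pos (by linarith)
    have hsq : 0 < Real.sqrt (Real.log t) := Real.sqrt_pos.mpr hlogpos
    have hE : 0 < Real.exp (-c₀ * Real.sqrt (Real.log t)) := Real.exp_pos _
    have htk : 0 < t ^ k := Real.rpow_pos_of_pos htpos k
    have hrw : t ^ (k + 1) = t ^ k * t := Real.rpow_add_one (ne_of_gt htpos) k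
    have hsqT : c₀ / (k + 1) ≤ Real.sqrt (Real.log t) := by
      refine le_trans hlogT (Real.sqrt_le_sqrt ?_)
      exact Real.log_le_log (by linarith) ht.1
    have hfrac : c₀ / (2 * Real.sqrt (Real.log t)) ≤ (k + 1) / 2 := by
      rw [div_le_div_iff₀ (by positivity) (by norm_num)]
      have := (div_le_iff₀ (by positivity : (0:ℝ) < k + 1)).mp hsqT
      nlinarith
    have hGeq : G t = t ^ k * Real.exp (-c₀ * Real.sqrt (Real.log t))
        * ((k + 1) - c₀ / (2 * Real.sqrt (Real.log t))) := by
      rw [hG]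
      simp only
      rw [hrw]
      field_simp
      ring
    rw [hGeq]
    have hge : (k + 1) - c₀ / (2 * Real.sqrt (Real.log t)) ≥ (k + 1) / 2 := by linarith
    have h1 : t ^ k * Real.exp (-c₀ * Real.sqrt (Real.log t)) * ((k + 1) / 2)
        ≤ t ^ k * Real.exp (-c₀ * Real.sqrt (Real.log t))
          * ((k + 1) - c₀ / (2 * Real.sqrt (Real.log t))) := by
      refine mul_le_mul_of_nonneg_left (by linarith) (by positivity)
    calc t ^ k * Real.exp (-c₀ * Real.sqrt (Real.log t))
        = (2 / (k + 1)) * (t ^ k * Real.exp (-c₀ * Real.sqrt (Real.log t)) * ((k + 1) / 2)) := by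
          field_simp
      _ ≤ _ := mul_le_mul_of_nonneg_left h1 (by positivity)
  have hIntG : IntervalIntegrable G volume T x := hcontG.intervalIntegrable
  have hIntLHS : IntervalIntegrable
      (fun t : ℝ => t ^ k * Real.exp (-c₀ * Real.sqrt (Real.log t))) volume T x := by
    refine (ContinuousOn.intervalIntegrable ?_)
    refine ContinuousOn.mono ?_ (fun t ht => (lt_of_lt_of_le one_lt_two (hmem t ht) : (1:ℝ) < t))
    exact ((contOn_rpow_Ioi k).mono fun t (ht : t ∈ Set.Ioi (1:ℝ)) => Set.mem_Ioi.mpr (lt_trans one_pos (Set.mem_Ioi.mp ht))).mul (contOn_expsl c₀)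
  have hFTC := intervalIntegral.integral_eq_sub_of_hasDerivAt hF hIntG
  have hmono := intervalIntegral.integral_mono_on hx hIntLHS (hIntG.const_mul (2/(k+1))) hptwise
  rw [intervalIntegral.integral_const_mul, hFTC] at hmono
  have hFT : 0 ≤ T ^ (k + 1) * Real.exp (-c₀ * Real.sqrt (Real.log T)) := by positivity
  have h2k : 0 ≤ 2 / (k + 1) := by positivity
  nlinarith

lemma intervalIntegrable_E (k : ℝ) (m n : ℕ) (c : ℝ) {a b : ℝ} (ha : 2 ≤ a) (hab : a ≤ b) :
    IntervalIntegrable (fun t => (k * t ^ (k - 1)) * (piCount t m n - c * Li t)) volume a b := by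
  have hsub : Set.uIcc a b ⊆ Set.Ioi (1:ℝ) :=
    uIcc_subset_Ioi_one (lt_of_lt_of_le one_lt_two ha)
      (lt_of_lt_of_le one_lt_two (le_trans ha hab))
  have hI_Li : IntervalIntegrable (fun t => (k * t ^ (k - 1)) * Li t) volume a b :=
    ((contOn_mul_Li (k-1) k).mono hsub).intervalIntegrable
  have hI_pi : IntervalIntegrable (fun t => (k * t ^ (k - 1)) * piCount t m n) volume a b := by
    rw [intervalIntegrable_iff_integrableOn_Icc_of_le hab]
    refine integrableOn_mul_piCount m n ?_
    exact continuousOn_const.mul ((contOn_rpow_Ioi (k-1)).mono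
      fun t ht => Set.mem_Ioi.mpr (lt_of_le_of_lt zero_le_one (Set.mem_Ioi.mp (hsub (Set.Icc_subset_uIcc ht)))))
  have heq : (fun t => (k * t ^ (k - 1)) * (piCount t m n - c * Li t))
      = fun t => (k * t ^ (k - 1)) * piCount t m n - c * ((k * t ^ (k - 1)) * Li t) := by
    funext t; ring
  rw [heq]
  exact hI_pi.sub (hI_Li.const_mul c)

lemma target_tendsto {k c₀ : ℝ} (hk : 0 < k) (hc₀ : 0 < c₀) :
    Tendsto (fun x : ℝ => x ^ (k + 1) * Real.exp (-c₀ * Real.sqrt (Real.log x))) atTop atTop := by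
  refine tendsto_atTop_mono' atTop ?_ (tendsto_rpow_atTop hk)
  have h1 : ∀ᶠ x : ℝ in atTop, c₀ ≤ Real.sqrt (Real.log x) := by
    filter_upwards [Real.tendsto_log_atTop.eventually_ge_atTop (c₀ ^ 2),
      eventually_ge_atTop (1:ℝ)] with x hx hx1
    exact (Real.le_sqrt' hc₀).mpr hx
  filter_upwards [h1, eventually_ge_atTop (1:ℝ)] with x hx hx1
  have hxpos : (0:ℝ) < x := by linarith
  have hlognn : 0 ≤ Real.log x := Real.log_nonneg hx1
  have h2 : c₀ * Real.sqrt (Real.log x) ≤ Real.log x := by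
    have := Real.sq_sqrt hlognn
    nlinarith [Real.sqrt_nonneg (Real.log x)]
  have h3 : Real.exp (-Real.log x) ≤ Real.exp (-c₀ * Real.sqrt (Real.log x)) :=
    Real.exp_le_exp.mpr (by linarith)
  have h4 : Real.exp (-Real.log x) = x⁻¹ := by
    rw [Real.exp_neg, Real.exp_log hxpos]
  calc x ^ k = x ^ (k + 1) * x⁻¹ := by
        rw [Real.rpow_add_one (ne_of_gt hxpos)]; field_simp
    _ ≤ x ^ (k + 1) * Real.exp (-c₀ * Real.sqrt (Real.log x)) := by
        rw [← h4]
        exact mul_le_mul_of_nonneg_left h3 (by positivity)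

theorem stmt_1 (k : ℝ) (hk : k > 0) (m n : ℕ) (hm : 0 < m) (hn : 0 < n)
    (hmn : Nat.Coprime m n) (α : ℝ) (hα : 0 < α)
    (hPNT : (fun x => piCount x m n - (1 / (Nat.totient m : ℝ)) * ∫ t in (2:ℝ)..x, 1 / Real.log t)
        =O[atTop] fun x => x * Real.exp (-(α / 2) * Real.sqrt (Real.log x))) :
    (fun x : ℝ => piPow k x m n - piCount (x ^ (k + 1)) m n)
      =O[atTop] fun x => x ^ (k + 1) * Real.exp (-(α / 2) * Real.sqrt (Real.log x)) := by
  have hc₀ : (0:ℝ) < α / 2 := by linarith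
  set c₀ : ℝ := α / 2 with hc₀def
  set φc : ℝ := 1 / (Nat.totient m : ℝ) with hφc
  set E : ℝ → ℝ := fun t => piCount t m n - φc * Li t with hEdef
  have hPNT' : E =O[atTop] fun x => x * Real.exp (-c₀ * Real.sqrt (Real.log x)) := hPNT
  set g : ℝ → ℝ := fun x => x ^ (k + 1) * Real.exp (-c₀ * Real.sqrt (Real.log x)) with hgdef
  have htendg : Tendsto g atTop atTop := target_tendsto hk hc₀
  have hgpos : ∀ x : ℝ, 1 ≤ x → 0 < g x := fun x hx => by
    have : (0:ℝ) < x := by linarith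
    positivity
  -- Term A
  have hA : (fun x : ℝ => x ^ k * E x) =O[atTop] g := by
    have h1 := (Asymptotics.isBigO_refl (fun x : ℝ => x ^ k) atTop).mul hPNT'
    refine h1.trans_eventuallyEq ?_
    filter_upwards [eventually_ge_atTop (1:ℝ)] with x hx
    have hxpos : (0:ℝ) < x := by linarith
    rw [hgdef]
    simp only
    rw [Real.rpow_add_one (ne_of_gt hxpos)]
    ring
  -- Term B
  have hB : (fun x : ℝ => E (x ^ (k + 1))) =O[atTop] g := by
    have hcomp : Tendsto (fun x : ℝ => x ^ (k + 1)) atTop atTop :=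
      tendsto_rpow_atTop (by linarith)
    have hB1 := hPNT'.comp_tendsto hcomp
    refine hB1.trans (Asymptotics.IsBigO.of_bound 1 ?_)
    filter_upwards [eventually_ge_atTop (1:ℝ)] with x hx
    have hxpos : (0:ℝ) < x := by linarith
    have hlognn : 0 ≤ Real.log x := Real.log_nonneg hx
    have hlogr : Real.log (x ^ (k + 1)) = (k + 1) * Real.log x := Real.log_rpow hxpos _
    have hsq : Real.sqrt (Real.log x) ≤ Real.sqrt (Real.log (x ^ (k + 1))) := by
      rw [hlogr]
      exact Real.sqrt_le_sqrt (by nlinarith)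
    have hexp : Real.exp (-c₀ * Real.sqrt (Real.log (x ^ (k + 1))))
        ≤ Real.exp (-c₀ * Real.sqrt (Real.log x)) := by
      refine Real.exp_le_exp.mpr ?_
      nlinarith
    have hxp : (0:ℝ) < x ^ (k + 1) := Real.rpow_pos_of_pos hxpos _
    rw [one_mul, Function.comp_apply, Real.norm_eq_abs, Real.norm_eq_abs,
      abs_of_pos (by positivity), abs_of_pos (hgpos x hx)]
    exact mul_le_mul_of_nonneg_left hexp hxp.le
  -- Term C : the integral
  obtain ⟨C, hCbound⟩ := hPNT'.bound
  set C' : ℝ := max C 0 with hC'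
  have hC'nn : 0 ≤ C' := le_max_right C 0
  have hCbound' : ∀ᶠ t : ℝ in atTop,
      ‖E t‖ ≤ C' * ‖t * Real.exp (-c₀ * Real.sqrt (Real.log t))‖ := by
    filter_upwards [hCbound] with t ht
    exact le_trans ht (mul_le_mul_of_nonneg_right (le_max_left C 0) (norm_nonneg _))
  have hsl : ∀ᶠ t : ℝ in atTop, c₀ / (k + 1) ≤ Real.sqrt (Real.log t) := by
    filter_upwards [Real.tendsto_log_atTop.eventually_ge_atTop ((c₀ / (k + 1)) ^ 2)] with t ht
    exact (Real.le_sqrt' (by positivity)).mpr ht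
  obtain ⟨T₀, hT₀⟩ := eventually_atTop.mp ((hCbound'.and hsl).and (eventually_ge_atTop (2:ℝ)))
  set T : ℝ := max T₀ 2 with hTdef
  have hT2 : (2:ℝ) ≤ T := le_max_right _ _
  have hTprop : ∀ t : ℝ, T ≤ t →
      (‖E t‖ ≤ C' * ‖t * Real.exp (-c₀ * Real.sqrt (Real.log t))‖
        ∧ c₀ / (k + 1) ≤ Real.sqrt (Real.log t)) ∧ 2 ≤ t :=
    fun t ht => hT₀ t (le_trans (le_max_left _ _) ht)
  set A : ℝ := ‖∫ t in (2:ℝ)..T, (k * t ^ (k - 1)) * E t‖ with hAdef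
  have hC : (fun x : ℝ => ∫ t in (2:ℝ)..x, (k * t ^ (k - 1)) * E t) =O[atTop] g := by
    refine Asymptotics.IsBigO.of_bound (1 + k * C' * (2 / (k + 1))) ?_
    filter_upwards [eventually_ge_atTop T, htendg.eventually_ge_atTop A] with x hxT hgA
    have hx2 : (2:ℝ) ≤ x := le_trans hT2 hxT
    have hx1 : (1:ℝ) ≤ x := by linarith
    have hsplit : ∫ t in (2:ℝ)..x, (k * t ^ (k - 1)) * E t
        = (∫ t in (2:ℝ)..T, (k * t ^ (k - 1)) * E t)
          + ∫ t in T..x, (k * t ^ (k - 1)) * E t := by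
      rw [intervalIntegral.integral_add_adjacent_intervals
        (intervalIntegrable_E k m n φc le_rfl hT2)
        (intervalIntegrable_E k m n φc hT2 hxT)]
    have hIE : IntervalIntegrable (fun t => (k * t ^ (k - 1)) * E t) volume T x :=
      intervalIntegrable_E k m n φc hT2 hxT
    have hRHScont : IntervalIntegrable
        (fun t : ℝ => (k * C') * (t ^ k * Real.exp (-c₀ * Real.sqrt (Real.log t)))) volume T x := by
      refine IntervalIntegrable.const_mul ?_ _
      refine (ContinuousOn.intervalIntegrable ?_)
      refine ContinuousOn.mono
        (((contOn_rpow_Ioi k).mono fun t (ht : t ∈ Set.Ioi (1:ℝ)) => Set.mem_Ioi.mpr (lt_trans one_pos (Set.mem_Ioi.mp ht))).mul (contOn_expsl c₀)) ?_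
      exact uIcc_subset_Ioi_one (lt_of_lt_of_le one_lt_two hT2) (lt_of_lt_of_le one_lt_two hx2)
    have hnorm : ‖∫ t in T..x, (k * t ^ (k - 1)) * E t‖
        ≤ ∫ t in T..x, ‖(k * t ^ (k - 1)) * E t‖ :=
      intervalIntegral.norm_integral_le_integral_norm hxT
    have hmono : ∫ t in T..x, ‖(k * t ^ (k - 1)) * E t‖
        ≤ ∫ t in T..x, (k * C') * (t ^ k * Real.exp (-c₀ * Real.sqrt (Real.log t))) := by
      refine intervalIntegral.integral_mono_on hxT hIE.norm hRHScont ?_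
      intro t ht
      obtain ⟨⟨hb, _⟩, h2t⟩ := hTprop t ht.1
      have htpos : (0:ℝ) < t := by linarith
      have hnorm2 : ‖t * Real.exp (-c₀ * Real.sqrt (Real.log t))‖
          = t * Real.exp (-c₀ * Real.sqrt (Real.log t)) := by
        rw [Real.norm_eq_abs, abs_of_pos (by positivity)]
      rw [hnorm2] at hb
      have hrw : t ^ (k - 1) * t = t ^ k := by
        rw [← Real.rpow_add_one (ne_of_gt htpos) (k - 1), sub_add_cancel]
      calc ‖(k * t ^ (k - 1)) * E t‖ = k * t ^ (k - 1) * ‖E t‖ := by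
            rw [norm_mul, Real.norm_eq_abs (k * t ^ (k-1)),
              abs_of_pos (by positivity : (0:ℝ) < k * t ^ (k-1))]
        _ ≤ k * t ^ (k - 1) * (C' * (t * Real.exp (-c₀ * Real.sqrt (Real.log t)))) := by
            refine mul_le_mul_of_nonneg_left hb (by positivity)
        _ = (k * C') * (t ^ (k - 1) * t * Real.exp (-c₀ * Real.sqrt (Real.log t))) := by ring
        _ = (k * C') * (t ^ k * Real.exp (-c₀ * Real.sqrt (Real.log t))) := by rw [hrw]
    have hkey : ∫ t in T..x, t ^ k * Real.exp (-c₀ * Real.sqrt (Real.log t))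
        ≤ (2 / (k + 1)) * g x :=
      key_integral_bound hk hc₀ hT2 (hTprop T le_rfl).1.2 hxT
    have hgx : ‖g x‖ = g x := by
      rw [Real.norm_eq_abs, abs_of_pos (hgpos x hx1)]
    rw [hgx]
    calc ‖∫ t in (2:ℝ)..x, (k * t ^ (k - 1)) * E t‖
        ≤ A + ‖∫ t in T..x, (k * t ^ (k - 1)) * E t‖ := by
          rw [hsplit]; exact norm_add_le _ _
      _ ≤ A + ((k * C') * ((2 / (k + 1)) * g x)) := by
          have h5 : ∫ t in T..x, (k * C') * (t ^ k * Real.exp (-c₀ * Real.sqrt (Real.log t)))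
              = (k * C') * ∫ t in T..x, t ^ k * Real.exp (-c₀ * Real.sqrt (Real.log t)) :=
            intervalIntegral.integral_const_mul _ _
          have h6 : (k * C') * ∫ t in T..x, t ^ k * Real.exp (-c₀ * Real.sqrt (Real.log t))
              ≤ (k * C') * ((2 / (k + 1)) * g x) :=
            mul_le_mul_of_nonneg_left hkey (by positivity)
          have := le_trans hnorm (le_trans hmono (le_of_eq h5))
          linarith [le_trans this h6]
      _ ≤ (1 + k * C' * (2 / (k + 1))) * g x := by nlinarith [hgpos x hx1]
  -- Term D : the constant
  have hD : (fun _ : ℝ => φc * ∫ t in ((2:ℝ) ^ (1/(k+1)))..2, t ^ k / Real.log t) =O[atTop] g := by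
    set K : ℝ := φc * ∫ t in ((2:ℝ) ^ (1/(k+1)))..2, t ^ k / Real.log t with hK
    refine Asymptotics.IsBigO.of_bound ‖K‖ ?_
    filter_upwards [htendg.eventually_ge_atTop 1, eventually_ge_atTop (1:ℝ)] with x hg1 hx1
    have : ‖g x‖ = g x := by rw [Real.norm_eq_abs, abs_of_pos (hgpos x hx1)]
    rw [this]
    exact le_mul_of_one_le_right (norm_nonneg _) hg1
  -- Combine
  have hev : (fun x : ℝ => piPow k x m n - piCount (x ^ (k + 1)) m n)
      =ᶠ[atTop] fun x : ℝ => x ^ k * E x - E (x ^ (k + 1))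
        - (∫ t in (2:ℝ)..x, (k * t ^ (k - 1)) * E t)
        - φc * ∫ t in ((2:ℝ) ^ (1/(k+1)))..2, t ^ k / Real.log t := by
    filter_upwards [eventually_ge_atTop (2:ℝ)] with x hx
    exact decomposition k hk m n hx
  exact hev.trans_isBigO (((hA.sub hB).sub hC).sub hD)
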